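/- Let g : [0,1]^s → ℝ. If g is componentwise concave and submodular, then for all x₁, x₂, x₃, x₄ ∈ [0,1]^s with x₁ ≤ x₂ ≤ x₄, x₁ ≤ x₃ ≤ x₄ (componentwise order), and x₁ + x₄ = x₂ + x₃, one has g(x₁) + g(x₄) ≤ g(x₂) + g(x₃). -/

import Mathlib

open Set

/-- Decreasing increments for a concave function on [0,1]. -/
lemma concave_incr (f : ℝ → ℝ) (hf : ConcaveOn ℝ (Set.Icc (0:ℝ) 1) f)
    (a c δ : ℝ) (hac : a ≤ c) (hδ : 0 ≤ δ)
    (ha : a ∈ Set.Icc (0:ℝ) 1) (hcd : c + δ ∈ Set.Icc (0:ℝ) 1) :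
    f a + f (c + δ) ≤ f (a + δ) + f c := by
  rcases eq_or_lt_of_le (show a ≤ c + δ by linarith) with heq | hlt
  · have hc : c = a := by linarith
    have hd : δ = 0 := by linarith
    subst hc hd
    simp
  · set L := c + δ - a with hL
    have hLpos : 0 < L := by simp [hL]; linarith
    set μ : ℝ := (c - a) / L with hμ
    set lam : ℝ := δ / L with hlam
    have hμ0 : 0 ≤ μ := div_nonneg (by linarith) hLpos.le
    have hlam0 : 0 ≤ lam := div_nonneg hδ hLpos.le
    have hsum : μ + lam = 1 := by
      rw [hμ, hlam, ← add_div, div_eq_one_iff_eq hLpos.ne', hL]; ring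
    have hsum2 : lam + μ = 1 := by linarith
    have h1 := hf.2 ha hcd hμ0 hlam0 hsum
    have h2 := hf.2 ha hcd hlam0 hμ0 hsum2
    have e1 : μ • a + lam • (c + δ) = a + δ := by
      simp only [smul_eq_mul, hμ, hlam]
      field_simp
      ring
    have e2 : lam • a + μ • (c + δ) = c := by
      simp only [smul_eq_mul, hμ, hlam]
      field_simp
      ring
    rw [e1] at h1
    rw [e2] at h2
    simp only [smul_eq_mul] at h1 h2
    have e : f a + f (c + δ) =
        (μ * f a + lam * f (c + δ)) + (lam * f a + μ * f (c + δ)) := by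
      linear_combination (f a + f (c + δ)) * hsum.symm
    linarith

lemma stepB (s : ℕ) (g : (Fin s → ℝ) → ℝ)
    (hcc : ∀ i : Fin s, ∀ x ∈ Set.Icc (0 : Fin s → ℝ) 1,
      ConcaveOn ℝ (Set.Icc (0:ℝ) 1) (fun t => g (Function.update x i t)))
    (hsub : ∀ x ∈ Set.Icc (0 : Fin s → ℝ) 1, ∀ y ∈ Set.Icc (0 : Fin s → ℝ) 1,
      g (x ⊓ y) + g (x ⊔ y) ≤ g x + g y)
    (x k : Fin s → ℝ) (i : Fin s) (t : ℝ) (ht : 0 ≤ t) (hk : 0 ≤ k) (hx0 : 0 ≤ x)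
    (htop : Function.update x i (x i + t) + k ≤ (1 : Fin s → ℝ)) :
    g x + g (Function.update x i (x i + t) + k) ≤
      g (Function.update x i (x i + t)) + g (x + k) := by
  set u := Function.update x i (x i + t) with hu
  set k' := Function.update k i 0 with hk'
  set y := x + k' with hy
  have hkj : ∀ j, 0 ≤ k j := fun j => hk j
  have hxj : ∀ j, 0 ≤ x j := fun j => hx0 j
  have htopj : ∀ j, u j + k j ≤ 1 := fun j => by simpa using htop j
  have hui : u i = x i + t := by simp [hu]
  have huj : ∀ j, j ≠ i → u j = x j := by
    intro j hj; simp [hu, Function.update_of_ne hj]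
  have hk'i : k' i = 0 := by simp [hk']
  have hk'j : ∀ j, j ≠ i → k' j = k j := by
    intro j hj; simp [hk', Function.update_of_ne hj]
  have hyi : y i = x i := by simp [hy, hk'i]
  have hyj : ∀ j, j ≠ i → y j = x j + k j := by
    intro j hj; simp [hy, hk'j j hj]
  -- bounds
  have hx1 : ∀ j, x j ≤ 1 := by
    intro j
    rcases eq_or_ne j i with hj | hj
    · rw [hj]; have := htopj i; rw [hui] at this; linarith [hkj i]
    · have := htopj j; rw [huj j hj] at this; linarith [hkj j]
  have hu0 : ∀ j, 0 ≤ u j := by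
    intro j
    rcases eq_or_ne j i with hj | hj
    · rw [hj, hui]; linarith [hxj i]
    · rw [huj j hj]; exact hxj j
  have hu1 : ∀ j, u j ≤ 1 := fun j => by linarith [htopj j, hkj j]
  have hy0 : ∀ j, 0 ≤ y j := by
    intro j
    rcases eq_or_ne j i with hj | hj
    · rw [hj, hyi]; exact hxj i
    · rw [hyj j hj]; linarith [hxj j, hkj j]
  have hy1 : ∀ j, y j ≤ 1 := by
    intro j
    rcases eq_or_ne j i with hj | hj
    · rw [hj, hyi]; exact hx1 i
    · rw [hyj j hj]; have := htopj j; rw [huj j hj] at this; linarith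
  have hxmem : x ∈ Set.Icc (0 : Fin s → ℝ) 1 :=
    ⟨fun j => by simpa using hxj j, fun j => by simpa using hx1 j⟩
  have humem : u ∈ Set.Icc (0 : Fin s → ℝ) 1 :=
    ⟨fun j => by simpa using hu0 j, fun j => by simpa using hu1 j⟩
  have hymem : y ∈ Set.Icc (0 : Fin s → ℝ) 1 :=
    ⟨fun j => by simpa using hy0 j, fun j => by simpa using hy1 j⟩
  -- key pointwise equalities
  have E1 : u ⊓ y = x := by
    funext j
    rcases eq_or_ne j i with hj | hj
    · rw [hj]
      simp only [Pi.inf_apply, hui, hyi]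
      exact min_eq_right (by linarith)
    · simp only [Pi.inf_apply, huj j hj, hyj j hj]
      exact min_eq_left (by linarith [hkj j])
  have E2 : u ⊔ y = Function.update y i (x i + t) := by
    funext j
    rcases eq_or_ne j i with hj | hj
    · rw [hj]
      simp only [Pi.sup_apply, hui, hyi, Function.update_self]
      exact max_eq_left (by linarith)
    · simp only [Pi.sup_apply, huj j hj, Function.update_of_ne hj, hyj j hj]
      exact max_eq_right (by linarith [hkj j])
  have E3 : Function.update y i (x i + k i) = x + k := by
    funext j
    rcases eq_or_ne j i with hj | hj
    · rw [hj]; simp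
    · simp only [Function.update_of_ne hj, hyj j hj, Pi.add_apply]
  have E4 : Function.update y i (x i + t + k i) = u + k := by
    funext j
    rcases eq_or_ne j i with hj | hj
    · rw [hj]; simp [hui]
    · simp only [Function.update_of_ne hj, hyj j hj, Pi.add_apply, huj j hj]
  have E0 : Function.update y i (x i) = y := by
    rw [← hyi]; exact Function.update_eq_self i y
  -- concavity step
  have hconc := hcc i y hymem
  have hA := concave_incr (fun t => g (Function.update y i t)) hconc
      (x i) (x i + t) (k i) (by linarith) (hkj i)
      ⟨hxj i, hx1 i⟩ ⟨by linarith [hkj i, hxj i], by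
        have h := htopj i; rw [hui] at h; linarith⟩
  simp only [E0] at hA
  rw [E3, E4] at hA
  -- submodularity step
  have hB := hsub u humem y hymem
  rw [E1, E2] at hB
  linarith

lemma main_ind (s : ℕ) (g : (Fin s → ℝ) → ℝ)
    (hcc : ∀ i : Fin s, ∀ x ∈ Set.Icc (0 : Fin s → ℝ) 1,
      ConcaveOn ℝ (Set.Icc (0:ℝ) 1) (fun t => g (Function.update x i t)))
    (hsub : ∀ x ∈ Set.Icc (0 : Fin s → ℝ) 1, ∀ y ∈ Set.Icc (0 : Fin s → ℝ) 1,
      g (x ⊓ y) + g (x ⊔ y) ≤ g x + g y)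
    (n : ℕ) :
    ∀ a h k : Fin s → ℝ, 0 ≤ a → 0 ≤ h → 0 ≤ k → a + h + k ≤ 1 →
      (∀ j : Fin s, n ≤ (j : ℕ) → h j = 0) →
      g a + g (a + h + k) ≤ g (a + h) + g (a + k) := by
  induction n with
  | zero =>
    intro a h k _ _ _ _ hz
    have hh : h = 0 := funext fun j => hz j (Nat.zero_le _)
    subst hh
    simp
  | succ n ih =>
    intro a h k ha hh hk htop hz
    by_cases hns : n < s
    · set i : Fin s := ⟨n, hns⟩ with hi
      set h' := Function.update h i 0 with hh'
      have hz' : ∀ j : Fin s, n ≤ (j : ℕ) → h' j = 0 := by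
        intro j hj
        rcases eq_or_ne j i with hji | hji
        · rw [hji]; simp [hh']
        · rw [hh', Function.update_of_ne hji]
          apply hz
          have : (j : ℕ) ≠ n := fun hc => hji (Fin.ext hc)
          omega
      have hh'0 : 0 ≤ h' := by
        intro j
        rcases eq_or_ne j i with hji | hji
        · rw [hji]; simp [hh']
        · rw [hh']; simpa [Function.update_of_ne hji] using hh j
      have hh'le : ∀ j, h' j ≤ h j := by
        intro j
        rcases eq_or_ne j i with hji | hji
        · rw [hji]; simpa [hh'] using hh i
        · simp [hh', Function.update_of_ne hji]
      have eqU : Function.update (a + h') i ((a + h') i + h i) = a + h := by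
        funext j
        rcases eq_or_ne j i with hji | hji
        · rw [hji]; simp [hh']
        · simp [Function.update_of_ne hji, hh', Pi.add_apply]
      have htop' : Function.update (a + h') i ((a + h') i + h i) + k ≤ (1 : Fin s → ℝ) := by
        rw [eqU]; exact htop
      have step := stepB s g hcc hsub (a + h') k i (h i) (hh i) hk
        (fun j => by simpa using add_nonneg (ha j) (hh'0 j)) htop'
      rw [eqU] at step
      have hah'k : a + h' + k ≤ (1 : Fin s → ℝ) := by
        intro j
        have := htop j
        simp only [Pi.add_apply, Pi.one_apply] at this ⊢
        linarith [hh'le j]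
      have ihh := ih a h' k ha hh'0 hk hah'k hz'
      -- step : g (a+h') + g (a+h+k) ≤ g (a+h) + g (a+h'+k)
      linarith
    · refine ih a h k ha hh hk htop ?_
      intro j hj
      exact absurd j.isLt (by omega)

theorem stmt_1 (s : ℕ) (g : (Fin s → ℝ) → ℝ)
    (hcc : ∀ i : Fin s, ∀ x ∈ Set.Icc (0 : Fin s → ℝ) 1,
      ConcaveOn ℝ (Set.Icc (0:ℝ) 1) (fun t => g (Function.update x i t)))
    (hsub : ∀ x ∈ Set.Icc (0 : Fin s → ℝ) 1, ∀ y ∈ Set.Icc (0 : Fin s → ℝ) 1,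
      g (x ⊓ y) + g (x ⊔ y) ≤ g x + g y) :
    ∀ x₁ ∈ Set.Icc (0 : Fin s → ℝ) 1, ∀ x₂ ∈ Set.Icc (0 : Fin s → ℝ) 1,
    ∀ x₃ ∈ Set.Icc (0 : Fin s → ℝ) 1, ∀ x₄ ∈ Set.Icc (0 : Fin s → ℝ) 1,
      x₁ ≤ x₂ → x₂ ≤ x₄ → x₁ ≤ x₃ → x₃ ≤ x₄ → x₁ + x₄ = x₂ + x₃ →
      g x₁ + g x₄ ≤ g x₂ + g x₃ := by
  intro x₁ h1 x₂ h2 x₃ h3 x₄ h4 h12 h24 h13 h34 hsum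
  have e2 : x₁ + (x₂ - x₁) = x₂ := by abel
  have e3 : x₁ + (x₃ - x₁) = x₃ := by abel
  have e4 : x₁ + (x₂ - x₁) + (x₃ - x₁) = x₄ := by
    have : x₄ = x₂ + x₃ - x₁ := by
      rw [eq_sub_iff_add_eq, ← hsum]; abel
    rw [this]; abel
  have key := main_ind s g hcc hsub s x₁ (x₂ - x₁) (x₃ - x₁) h1.1
    (sub_nonneg.2 h12) (sub_nonneg.2 h13) (by rw [e4]; exact h4.2)
    (fun j hj => absurd j.isLt (by omega))
  rw [e4, e2, e3] at key
  exact key
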